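/- Fix real numbers θ_0 with 1/2 < θ_0 < 691/1318 and c_1 with 0 ≤ c_1 < 8×10^{-6}. For a natural number m set k_0 := m^2·e^{4m/(θ_0(1−c_1)) + 8}, A := log(2k_0) − 2·log log(2k_0), T := (e^A − 1)/A, and γ := (1/A)·(1 − 1/(1 + A·T)). Then log k_0 − 2·log γ − ( 4·log m + 4m/(θ_0(1−c_1)) + 8 + 2·log(4/(θ_0(1−c_1))) ) → 0 as m → ∞. -/

import Mathlib

open Filter

/-- `k₀(m) = m² e^{4m/(θ₀(1-c₁)) + 8}` (as a real number). -/
noncomputable def paperK0 (θ0 c1 : ℝ) (m : ℕ) : ℝ :=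
  (m : ℝ) ^ 2 * Real.exp (4 * m / (θ0 * (1 - c1)) + 8)

/-- `A = log (2k₀) - 2 log log (2k₀)` (here `x` plays the role of `k₀`). -/
noncomputable def paperA' (x : ℝ) : ℝ := Real.log (2 * x) - 2 * Real.log (Real.log (2 * x))

/-- `T = (e^A - 1)/A`. -/
noncomputable def paperT' (x : ℝ) : ℝ := (Real.exp (paperA' x) - 1) / paperA' x

/-- `γ = (1/A)(1 - 1/(1 + A T))`. -/
noncomputable def paperGamma' (x : ℝ) : ℝ :=
  (1 / paperA' x) * (1 - 1 / (1 + paperA' x * paperT' x))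

lemma paperGamma'_eq (x : ℝ) (ha : paperA' x ≠ 0) :
    paperGamma' x = (1 - Real.exp (-(paperA' x))) / paperA' x := by
  unfold paperGamma' paperT'
  rw [mul_div_cancel₀ _ ha]
  have h1 : 1 + (Real.exp (paperA' x) - 1) = Real.exp (paperA' x) := by ring
  rw [h1, Real.exp_neg]
  ring

lemma tendsto_sub_two_log : Tendsto (fun x : ℝ => x - 2 * Real.log x) atTop atTop := by
  have h := Real.isLittleO_log_id_atTop.def (by norm_num : (0:ℝ) < 1/4)
  apply tendsto_atTop_mono' atTop ?_ (tendsto_id.atTop_div_const (by norm_num : (0:ℝ) < 2))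
  filter_upwards [h, eventually_ge_atTop (0:ℝ)] with x hx hx0
  have hax : |Real.log x| ≤ 1/4 * x := by
    simpa [abs_of_nonneg hx0, Real.norm_eq_abs] using hx
  have := abs_le.1 hax
  simp only [id_eq]
  linarith [this.2]

/-- With `k₀ = m² e^{4m/(θ₀(1-c₁))+8}`, one has
`log k₀ - 2 log γ = 4 log m + 4m/(θ₀(1-c₁)) + 8 + 2 log (4/(θ₀(1-c₁))) + o(1)` as `m → ∞`. -/
theorem logk0_sub_twoLogGamma_asymptotic (θ0 c1 : ℝ)
    (hθ1 : 1 / 2 < θ0) (hθ2 : θ0 < 691 / 1318)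
    (hc1 : 0 ≤ c1) (hc2 : c1 < 8e-6) :
    Tendsto (fun m : ℕ =>
        Real.log (paperK0 θ0 c1 m) - 2 * Real.log (paperGamma' (paperK0 θ0 c1 m)) -
          (4 * Real.log m + 4 * m / (θ0 * (1 - c1)) + 8 +
            2 * Real.log (4 / (θ0 * (1 - c1)))))
      atTop (nhds 0) := by
  have hθ0 : 0 < θ0 := lt_trans (by norm_num) hθ1
  have hc1' : (0:ℝ) < 1 - c1 := by nlinarith
  set c : ℝ := 4 / (θ0 * (1 - c1)) with hc_def
  have hc : 0 < c := by positivity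
  have hcm_eq : ∀ m : ℕ, c * m = 4 * m / (θ0 * (1 - c1)) := by
    intro m; rw [hc_def]; ring
  set L : ℕ → ℝ := fun m => Real.log (2 * paperK0 θ0 c1 m) with hL
  have hLval : ∀ m : ℕ, 1 ≤ m → L m = Real.log 2 + 2 * Real.log m + (c * m + 8) := by
    intro m hm
    have hm0 : (0:ℝ) < m := by exact_mod_cast hm
    simp only [hL, paperK0]
    rw [Real.log_mul (by norm_num) (by positivity),
      Real.log_mul (by positivity) (Real.exp_ne_zero _), Real.log_pow, Real.log_exp,
      ← hcm_eq m]
    push_cast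
    ring
  -- L → ∞
  have hcast : Tendsto (fun m : ℕ => (m : ℝ)) atTop atTop := tendsto_natCast_atTop_atTop
  have hcm_top : Tendsto (fun m : ℕ => c * (m : ℝ)) atTop atTop := hcast.const_mul_atTop hc
  have hLtop : Tendsto L atTop atTop := by
    apply Tendsto.congr' (f₁ := fun m : ℕ => Real.log 2 + 2 * Real.log m + (c * m + 8))
    · filter_upwards [eventually_ge_atTop 1] with m hm using (hLval m hm).symm
    · have ha1 : Tendsto (fun m : ℕ => Real.log 2 + 2 * Real.log m) atTop atTop :=
        tendsto_atTop_add_const_left _ _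
          ((Real.tendsto_log_atTop.comp hcast).const_mul_atTop (by norm_num))
      exact Tendsto.atTop_add_atTop ha1 (tendsto_atTop_add_const_right _ _ hcm_top)
  set A : ℕ → ℝ := fun m => paperA' (paperK0 θ0 c1 m) with hA
  have hA_eq : ∀ m, A m = L m - 2 * Real.log (L m) := fun m => rfl
  have hAtop : Tendsto A atTop atTop := by
    have := tendsto_sub_two_log.comp hLtop
    exact this.congr fun m => (hA_eq m).symm
  -- log x / x → 0 pieces
  have hlogdiv : Tendsto (fun x : ℝ => Real.log x / x) atTop (nhds 0) :=
    Real.isLittleO_log_id_atTop.tendsto_div_nhds_zero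
  have hlogm : Tendsto (fun m : ℕ => Real.log m / m) atTop (nhds 0) := hlogdiv.comp hcast
  have hinv : Tendsto (fun m : ℕ => (c * (m : ℝ))⁻¹) atTop (nhds 0) :=
    hcm_top.inv_tendsto_atTop
  -- L m / (c m) → 1
  have h1 : Tendsto (fun m : ℕ => L m / (c * m)) atTop (nhds 1) := by
    apply Tendsto.congr' (f₁ := fun m : ℕ =>
      (Real.log 2 + 8) * (c * (m : ℝ))⁻¹ + (2 / c) * (Real.log m / m) + 1)
    · filter_upwards [eventually_ge_atTop 1] with m hm
      have hm0 : (0:ℝ) < m := by exact_mod_cast hm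
      rw [hLval m hm]
      field_simp
      ring
    · have := (((tendsto_const_nhds (x := Real.log 2 + 8)).mul hinv).add
        ((tendsto_const_nhds (x := 2/c)).mul hlogm)).add (tendsto_const_nhds (x := (1:ℝ)))
      simpa using this
  -- log (L m) / L m → 0
  have h2 : Tendsto (fun m : ℕ => Real.log (L m) / L m) atTop (nhds 0) := hlogdiv.comp hLtop
  -- A m / (c m) → 1
  have hA1 : Tendsto (fun m : ℕ => A m / (c * m)) atTop (nhds 1) := by
    apply Tendsto.congr' (f₁ := fun m : ℕ =>
      L m / (c * m) - 2 * (Real.log (L m) / L m) * (L m / (c * m)))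
    · filter_upwards [hLtop.eventually_gt_atTop 0, eventually_ge_atTop 1] with m hLm hm
      have hm0 : (0:ℝ) < m := by exact_mod_cast hm
      rw [hA_eq m]
      field_simp
    · have := h1.sub (((tendsto_const_nhds (x := (2:ℝ))).mul h2).mul h1)
      simpa using this
  -- final limit pieces
  have hApos : ∀ᶠ m : ℕ in atTop, 0 < A m := hAtop.eventually_gt_atTop 0
  have hlogA1 : Tendsto (fun m : ℕ => Real.log (A m / (c * m))) atTop (nhds 0) := by
    have := (Real.continuousAt_log one_ne_zero).tendsto.comp hA1
    simpa [Function.comp_def] using this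
  have hexp : Tendsto (fun m : ℕ => Real.exp (-(A m))) atTop (nhds 0) := by
    have : Tendsto (fun x : ℝ => Real.exp (-x)) atTop (nhds 0) := by
      simpa using Real.tendsto_exp_comp_nhds_zero.mpr (tendsto_neg_atTop_atBot)
    exact this.comp hAtop
  have hlog1e : Tendsto (fun m : ℕ => Real.log (1 - Real.exp (-(A m)))) atTop (nhds 0) := by
    have h1e : Tendsto (fun m : ℕ => 1 - Real.exp (-(A m))) atTop (nhds 1) := by
      simpa using (tendsto_const_nhds (x := (1:ℝ))).sub hexp
    have := (Real.continuousAt_log one_ne_zero).tendsto.comp h1e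
    simpa [Function.comp_def] using this
  have hG : Tendsto (fun m : ℕ =>
      2 * Real.log (A m / (c * m)) - 2 * Real.log (1 - Real.exp (-(A m)))) atTop (nhds 0) := by
    have := ((tendsto_const_nhds (x := (2:ℝ))).mul hlogA1).sub
      ((tendsto_const_nhds (x := (2:ℝ))).mul hlog1e)
    simpa using this
  apply Tendsto.congr' _ hG
  filter_upwards [hApos, eventually_ge_atTop 1] with m hAm hm
  have hm0 : (0:ℝ) < m := by exact_mod_cast hm
  have hane : A m ≠ 0 := ne_of_gt hAm
  have hexplt : Real.exp (-(A m)) < 1 := Real.exp_lt_one_iff.mpr (by linarith)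
  have h1epos : (0:ℝ) < 1 - Real.exp (-(A m)) := by linarith
  have hlogk : Real.log (paperK0 θ0 c1 m) = 2 * Real.log m + (c * m + 8) := by
    unfold paperK0
    rw [Real.log_mul (by positivity) (Real.exp_ne_zero _), Real.log_pow, Real.log_exp,
      ← hcm_eq m]
    push_cast
    ring
  have hgam : Real.log (paperGamma' (paperK0 θ0 c1 m)) =
      Real.log (1 - Real.exp (-(A m))) - Real.log (A m) := by
    rw [paperGamma'_eq _ hane, Real.log_div (ne_of_gt h1epos) hane]
  have hlogdiv2 : Real.log (A m / (c * m)) =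
      Real.log (A m) - (Real.log c + Real.log m) := by
    rw [Real.log_div hane (by positivity), Real.log_mul (ne_of_gt hc) (ne_of_gt hm0)]
  rw [hlogdiv2]
  rw [hlogk, hgam, ← hcm_eq m]
  ring
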